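/- For subspaces u, v, v' of an n-dimensional F_q-vector space V, there exists an invertible linear map σ of V with σ(u) = u and σ(v) = v' if and only if dim v = dim v' and dim(u ∩ v) = dim(u ∩ v'). -/

import Mathlib

open Module Submodule

section Aux

variable {F V : Type*} [Field F] [AddCommGroup V] [Module F V]

/-- Relative complement inside a subspace. -/
lemma aux_relcompl (W u : Submodule F V) (h : W ≤ u) :
    ∃ C : Submodule F V, C ≤ u ∧ Disjoint W C ∧ W ⊔ C = u := by
  obtain ⟨q, hq⟩ := Submodule.exists_isCompl (W.comap u.subtype)
  refine ⟨q.map u.subtype, ?_, ?_, ?_⟩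
  · rintro x ⟨y, -, rfl⟩; exact y.2
  · rw [Submodule.disjoint_def]
    intro x hxW hxC
    obtain ⟨y, hy, rfl⟩ := hxC
    have : y ∈ W.comap u.subtype ⊓ q := ⟨hxW, hy⟩
    rw [hq.inf_eq_bot] at this
    have h0 := (Submodule.mem_bot F).1 this
    simp [h0]
  · have : W.comap u.subtype ⊔ q = ⊤ := hq.sup_eq_top
    have h2 : (W.comap u.subtype ⊔ q).map u.subtype = (⊤ : Submodule F u).map u.subtype := by
      rw [this]
    rw [Submodule.map_sup, Submodule.map_comap_subtype, Submodule.map_top,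
      Submodule.range_subtype, inf_of_le_right h] at h2
    exact h2

lemma aux_disj3 {A B C U : Submodule F V} (hA : A ≤ U) (hB : B ≤ U)
    (hAB : Disjoint A B) (hUC : Disjoint U C) : Disjoint A (B ⊔ C) := by
  rw [Submodule.disjoint_def]
  intro x hxA hx
  obtain ⟨b, hb, c, hc, rfl⟩ := Submodule.mem_sup.1 hx
  have hcU : c ∈ U := by
    have : c = (b + c) - b := (add_sub_cancel_left b c).symm
    rw [this]
    exact U.sub_mem (hA hxA) (hB hb)
  have hc0 : c = 0 := (Submodule.disjoint_def.1 hUC) c hcU hc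
  subst hc0
  rw [add_zero] at hxA ⊢
  have : b = 0 := (Submodule.disjoint_def.1 hAB) b hxA hb
  simp [this]

/-- The equivalence `B × C ≃ B ⊔ C` for disjoint subspaces. -/
noncomputable def auxPairEquiv (B C : Submodule F V) (h : Disjoint B C) :
    (B × C) ≃ₗ[F] ↥(B ⊔ C) := by
  have hinj : Function.Injective (B.subtype.coprod C.subtype) := by
    rw [← LinearMap.ker_eq_bot, Submodule.eq_bot_iff]
    rintro ⟨b, c⟩ hbc
    simp only [LinearMap.mem_ker, LinearMap.coprod_apply, Submodule.coe_subtype] at hbc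
    have hbC : (b : V) ∈ C := by
      have : (b : V) = -c := eq_neg_of_add_eq_zero_left hbc
      rw [this]; exact C.neg_mem c.2
    have hb0 : (b : V) = 0 := (Submodule.disjoint_def.1 h) b b.2 hbC
    have hc0 : (c : V) = 0 := by
      have : (b : V) + c = 0 := hbc
      rw [hb0, zero_add] at this; exact this
    exact Prod.ext (Subtype.ext hb0) (Subtype.ext hc0)
  exact (LinearEquiv.ofInjective _ hinj).trans
    (LinearEquiv.ofEq _ _ (by rw [LinearMap.range_coprod, Submodule.range_subtype,
      Submodule.range_subtype]))

lemma auxPairEquiv_coe (B C : Submodule F V) (h : Disjoint B C) (b : B) (c : C) :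
    ((auxPairEquiv B C h (b, c) : ↥(B ⊔ C)) : V) = (b : V) + c := rfl

/-- Core construction: an automorphism out of two three-fold decompositions. -/
lemma aux_core (A B C A' B' C' : Submodule F V)
    (h1 : IsCompl A (B ⊔ C)) (h2 : Disjoint B C)
    (h1' : IsCompl A' (B' ⊔ C')) (h2' : Disjoint B' C')
    (φA : A ≃ₗ[F] A') (φB : B ≃ₗ[F] B') (φC : C ≃ₗ[F] C') :
    ∃ σ : V ≃ₗ[F] V, ∀ (a : A) (b : B) (c : C),
      σ ((a : V) + b + c) = (φA a : V) + φB b + φC c := by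
  let eBC := auxPairEquiv B C h2
  let eBC' := auxPairEquiv B' C' h2'
  let e : (A × (B × C)) ≃ₗ[F] V :=
    (LinearEquiv.prodCongr (LinearEquiv.refl F A) eBC).trans (Submodule.prodEquivOfIsCompl A (B ⊔ C) h1)
  let e' : (A' × (B' × C')) ≃ₗ[F] V :=
    (LinearEquiv.prodCongr (LinearEquiv.refl F A') eBC').trans (Submodule.prodEquivOfIsCompl A' (B' ⊔ C') h1')
  have he : ∀ (a : A) (b : B) (c : C), e (a, (b, c)) = (a : V) + b + c := by
    intro a b c
    show (Submodule.prodEquivOfIsCompl A (B ⊔ C) h1) (a, eBC (b, c)) = _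
    rw [Submodule.coe_prodEquivOfIsCompl']
    rw [auxPairEquiv_coe, add_assoc]
  have he' : ∀ (a : A') (b : B') (c : C'), e' (a, (b, c)) = (a : V) + b + c := by
    intro a b c
    show (Submodule.prodEquivOfIsCompl A' (B' ⊔ C') h1') (a, eBC' (b, c)) = _
    rw [Submodule.coe_prodEquivOfIsCompl']
    rw [auxPairEquiv_coe, add_assoc]
  refine ⟨e.symm.trans ((LinearEquiv.prodCongr φA (LinearEquiv.prodCongr φB φC)).trans e'), ?_⟩
  intro a b c
  have hsymm : e.symm ((a : V) + b + c) = (a, (b, c)) := by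
    rw [LinearEquiv.symm_apply_eq, he]
  simp only [LinearEquiv.trans_apply, hsymm, LinearEquiv.prodCongr_apply]
  exact he' (φA a) (φB b) (φC c)

end Aux

section Steps

variable {F V : Type*} [Field F] [AddCommGroup V] [Module F V] [FiniteDimensional F V]

/-- Step 1: an automorphism fixing `u` (setwise) and moving `W` to `W'`. -/
lemma aux_step1 (u W W' : Submodule F V) (hW : W ≤ u) (hW' : W' ≤ u)
    (hrk : finrank F W = finrank F W') :
    ∃ σ : V ≃ₗ[F] V, Submodule.map (σ : V →ₗ[F] V) u = u ∧
      Submodule.map (σ : V →ₗ[F] V) W = W' := by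
  obtain ⟨Cc, hCu, hWC, hWCu⟩ := aux_relcompl W u hW
  obtain ⟨Cc', hCu', hWC', hWCu'⟩ := aux_relcompl W' u hW'
  obtain ⟨E, hE⟩ := Submodule.exists_isCompl u
  have hrkC : finrank F Cc = finrank F Cc' := by
    have h1 := Submodule.finrank_sup_add_finrank_inf_eq W Cc
    have h2 := Submodule.finrank_sup_add_finrank_inf_eq W' Cc'
    rw [hWCu, hWC.eq_bot, finrank_bot, add_zero] at h1
    rw [hWCu', hWC'.eq_bot, finrank_bot, add_zero] at h2
    omega
  have hc1 : IsCompl W (Cc ⊔ E) := by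
    constructor
    · exact aux_disj3 hW hCu hWC hE.disjoint
    · rw [codisjoint_iff, ← sup_assoc, hWCu, ← codisjoint_iff]
      exact hE.codisjoint
  have hc1' : IsCompl W' (Cc' ⊔ E) := by
    constructor
    · exact aux_disj3 hW' hCu' hWC' hE.disjoint
    · rw [codisjoint_iff, ← sup_assoc, hWCu', ← codisjoint_iff]
      exact hE.codisjoint
  have hd2 : Disjoint Cc E := hE.disjoint.mono_left hCu
  have hd2' : Disjoint Cc' E := hE.disjoint.mono_left hCu'
  obtain ⟨σ, hσ⟩ := aux_core W Cc E W' Cc' E hc1 hd2 hc1' hd2'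
    (LinearEquiv.ofFinrankEq _ _ hrk) (LinearEquiv.ofFinrankEq _ _ hrkC) (LinearEquiv.refl F E)
  have hmapW : Submodule.map (σ : V →ₗ[F] V) W ≤ W' := by
    rintro x ⟨y, hy, rfl⟩
    have := hσ ⟨y, hy⟩ 0 0
    simp only [Submodule.coe_zero, add_zero, map_zero] at this
    simp only [LinearEquiv.coe_coe]
    rw [this]
    exact (LinearEquiv.ofFinrankEq _ _ hrk ⟨y, hy⟩).2
  have hmapu : Submodule.map (σ : V →ₗ[F] V) u ≤ u := by
    rintro x ⟨y, hy, rfl⟩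
    rw [← hWCu] at hy
    obtain ⟨w, hw, c, hc, rfl⟩ := Submodule.mem_sup.1 hy
    have := hσ ⟨w, hw⟩ ⟨c, hc⟩ 0
    simp only [Submodule.coe_zero, add_zero, map_zero] at this
    simp only [LinearEquiv.coe_coe]
    rw [this]
    exact u.add_mem (hW' (LinearEquiv.ofFinrankEq _ _ hrk ⟨w, hw⟩).2)
      (hCu' (LinearEquiv.ofFinrankEq _ _ hrkC ⟨c, hc⟩).2)
  refine ⟨σ, ?_, ?_⟩
  · exact Submodule.eq_of_le_of_finrank_eq hmapu (LinearEquiv.finrank_map_eq σ u)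
  · exact Submodule.eq_of_le_of_finrank_eq hmapW
      (by rw [LinearEquiv.finrank_map_eq σ W, hrk])

/-- Step 2: given `u ⊓ v = u ⊓ v'` and `finrank v = finrank v'`, an automorphism fixing `u`
and moving `v` to `v'`. -/
lemma aux_step2 (u v v' : Submodule F V) (hinf : u ⊓ v = u ⊓ v')
    (hrk : finrank F v = finrank F v') :
    ∃ σ : V ≃ₗ[F] V, Submodule.map (σ : V →ₗ[F] V) u = u ∧
      Submodule.map (σ : V →ₗ[F] V) v = v' := by
  set W : Submodule F V := u ⊓ v with hWdef
  have hWv : W ≤ v := inf_le_right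
  have hWv' : W ≤ v' := hinf.le.trans inf_le_right
  have hWu : W ≤ u := inf_le_left
  obtain ⟨D, hDv, hWD, hWDv⟩ := aux_relcompl W v hWv
  obtain ⟨D', hDv', hWD', hWDv'⟩ := aux_relcompl W v' hWv'
  obtain ⟨E, hE⟩ := Submodule.exists_isCompl (u ⊔ v)
  obtain ⟨E', hE'⟩ := Submodule.exists_isCompl (u ⊔ v')
  have huD : Disjoint u D := by
    rw [Submodule.disjoint_def]
    intro x hxu hxD
    have : x ∈ W ⊓ D := ⟨⟨hxu, hDv hxD⟩, hxD⟩
    rw [hWD.eq_bot] at this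
    simpa using this
  have huD' : Disjoint u D' := by
    rw [Submodule.disjoint_def]
    intro x hxu hxD
    have hxW : x ∈ W := by rw [hinf]; exact ⟨hxu, hDv' hxD⟩
    have : x ∈ W ⊓ D' := ⟨hxW, hxD⟩
    rw [hWD'.eq_bot] at this
    simpa using this
  have hrkD : finrank F D = finrank F D' := by
    have h1 := Submodule.finrank_sup_add_finrank_inf_eq W D
    have h2 := Submodule.finrank_sup_add_finrank_inf_eq W D'
    rw [hWDv, hWD.eq_bot, finrank_bot, add_zero] at h1
    rw [hWDv', hWD'.eq_bot, finrank_bot, add_zero] at h2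
    omega
  have hrkE : finrank F E = finrank F E' := by
    have h1 := Submodule.finrank_add_eq_of_isCompl hE
    have h2 := Submodule.finrank_add_eq_of_isCompl hE'
    have h3 := Submodule.finrank_sup_add_finrank_inf_eq u v
    have h4 := Submodule.finrank_sup_add_finrank_inf_eq u v'
    have h5 : finrank F (u ⊓ v : Submodule F V) = finrank F W := by rw [hWdef]
    have h6 : finrank F (u ⊓ v' : Submodule F V) = finrank F W := by rw [hinf]
    omega
  have hc1 : IsCompl u (D ⊔ E) := by
    constructor
    · exact aux_disj3 le_sup_left (hDv.trans le_sup_right) huD hE.disjoint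
    · rw [codisjoint_iff, ← sup_assoc]
      have huDv : u ⊔ D = u ⊔ v := by
        rw [← hWDv, ← sup_assoc, sup_eq_left.2 hWu]
      rw [huDv, ← codisjoint_iff]
      exact hE.codisjoint
  have hc1' : IsCompl u (D' ⊔ E') := by
    constructor
    · exact aux_disj3 le_sup_left (hDv'.trans le_sup_right) huD' hE'.disjoint
    · rw [codisjoint_iff, ← sup_assoc]
      have huDv' : u ⊔ D' = u ⊔ v' := by
        rw [← hWDv', ← sup_assoc, sup_eq_left.2 hWu]
      rw [huDv', ← codisjoint_iff]
      exact hE'.codisjoint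
  have hd2 : Disjoint D E := hE.disjoint.mono_left (hDv.trans le_sup_right)
  have hd2' : Disjoint D' E' := hE'.disjoint.mono_left (hDv'.trans le_sup_right)
  obtain ⟨σ, hσ⟩ := aux_core u D E u D' E' hc1 hd2 hc1' hd2'
    (LinearEquiv.refl F u) (LinearEquiv.ofFinrankEq _ _ hrkD) (LinearEquiv.ofFinrankEq _ _ hrkE)
  have hmapu : Submodule.map (σ : V →ₗ[F] V) u ≤ u := by
    rintro x ⟨y, hy, rfl⟩
    have := hσ ⟨y, hy⟩ 0 0
    simp only [Submodule.coe_zero, add_zero, map_zero] at this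
    simp only [LinearEquiv.coe_coe]
    rw [this]
    exact hy
  have hmapv : Submodule.map (σ : V →ₗ[F] V) v ≤ v' := by
    rintro x ⟨y, hy, rfl⟩
    rw [← hWDv] at hy
    obtain ⟨w, hw, d, hd, rfl⟩ := Submodule.mem_sup.1 hy
    have := hσ ⟨w, hWu hw⟩ ⟨d, hd⟩ 0
    simp only [Submodule.coe_zero, add_zero, map_zero] at this
    simp only [LinearEquiv.coe_coe]
    rw [this]
    exact v'.add_mem (hWv' hw) (hDv' (LinearEquiv.ofFinrankEq _ _ hrkD ⟨d, hd⟩).2)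
  refine ⟨σ, ?_, ?_⟩
  · exact Submodule.eq_of_le_of_finrank_eq hmapu (LinearEquiv.finrank_map_eq σ u)
  · exact Submodule.eq_of_le_of_finrank_eq hmapv
      (by rw [LinearEquiv.finrank_map_eq σ v, hrk])

end Steps

theorem stmt18 {F V : Type*} [Field F] [Fintype F] [AddCommGroup V] [Module F V]
    [FiniteDimensional F V] (u v v' : Submodule F V) :
    (∃ σ : V ≃ₗ[F] V,
        Submodule.map (σ : V →ₗ[F] V) u = u ∧ Submodule.map (σ : V →ₗ[F] V) v = v') ↔
      (Module.finrank F v = Module.finrank F v' ∧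
        Module.finrank F (u ⊓ v : Submodule F V)
          = Module.finrank F (u ⊓ v' : Submodule F V)) := by
  constructor
  · rintro ⟨σ, hu, hv⟩
    have hinj : Function.Injective (σ : V →ₗ[F] V) := σ.injective
    have hmi : Submodule.map (σ : V →ₗ[F] V) (u ⊓ v) = u ⊓ v' := by
      rw [Submodule.map_inf _ hinj, hu, hv]
    constructor
    · rw [← hv, LinearEquiv.finrank_map_eq]
    · rw [← hmi, LinearEquiv.finrank_map_eq]
  · rintro ⟨hrkv, hrkinf⟩
    obtain ⟨σ₁, hσ₁u, hσ₁W⟩ := aux_step1 u (u ⊓ v) (u ⊓ v') inf_le_left inf_le_left hrkinf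
    set v₁ : Submodule F V := Submodule.map (σ₁ : V →ₗ[F] V) v with hv₁
    have hinj₁ : Function.Injective (σ₁ : V →ₗ[F] V) := σ₁.injective
    have hinf₁ : u ⊓ v₁ = u ⊓ v' := by
      rw [← hσ₁W, hv₁]
      conv_lhs => rw [← hσ₁u]
      exact (Submodule.map_inf _ hinj₁).symm
    have hrk₁ : finrank F v₁ = finrank F v' := by
      rw [hv₁, LinearEquiv.finrank_map_eq, hrkv]
    obtain ⟨σ₂, hσ₂u, hσ₂v⟩ := aux_step2 u v₁ v' hinf₁ hrk₁
    refine ⟨σ₁.trans σ₂, ?_, ?_⟩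
    · have : (((σ₁.trans σ₂) : V ≃ₗ[F] V) : V →ₗ[F] V)
          = (σ₂ : V →ₗ[F] V).comp (σ₁ : V →ₗ[F] V) := rfl
      rw [this, Submodule.map_comp, hσ₁u, hσ₂u]
    · have : (((σ₁.trans σ₂) : V ≃ₗ[F] V) : V →ₗ[F] V)
          = (σ₂ : V →ₗ[F] V).comp (σ₁ : V →ₗ[F] V) := rfl
      rw [this, Submodule.map_comp, ← hv₁, hσ₂v]
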